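/- arXiv:2408.07209 — 2 statements merged into one kernel-verified Lean document; each statement's English description precedes it below -/
import Mathlib

section
/- There exist constants C > 0 and b₀ > 0 (depending only on d) such that for all b ∈ (0, b₀) and all s ∈ Int(S_d), 0 < A_b(s) ≤ [ b^{(d+1)/2} (1/b + d)^{d+1/2} / ( (4π)^{d/2} √( (1−‖s‖₁) ∏_{i=1}^d s_i ) ) ] (1 + C b), where A_b(s) = ∫_{S_d} κ_{s,b}(x)² dx. -/
open MeasureTheory ProbabilityTheory Real Filter Finset Matrix

noncomputable section

/-- The unit simplex `S_d = {x ∈ [0,1]^d : x_1 + … + x_d ≤ 1}`. -/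
def Sd (d : ℕ) : Set (Fin d → ℝ) :=
  {x | (∀ i, 0 ≤ x i ∧ x i ≤ 1) ∧ ∑ i, x i ≤ 1}

/-- The interior of the unit simplex. -/
def SdInt (d : ℕ) : Set (Fin d → ℝ) :=
  {x | (∀ i, 0 < x i) ∧ ∑ i, x i < 1}

/-- The Dirichlet(u, v) density on the simplex. -/
def Kdir {d : ℕ} (u : Fin d → ℝ) (v : ℝ) (x : Fin d → ℝ) : ℝ :=
  (Gamma ((∑ i, u i) + v) / (Gamma v * ∏ i, Gamma (u i))) *
    (1 - ∑ i, x i) ^ (v - 1) * ∏ i, (x i) ^ (u i - 1)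

/-- The locally adaptive Dirichlet kernel `κ_{s,b}`. -/
def kappa {d : ℕ} (s : Fin d → ℝ) (b : ℝ) : (Fin d → ℝ) → ℝ :=
  Kdir (fun i => s i / b + 1) ((1 - ∑ i, s i) / b + 1)

/-- `A_b(s) = ∫_{S_d} κ_{s,b}(x)² dx`. -/
def Adir {d : ℕ} (b : ℝ) (s : Fin d → ℝ) : ℝ :=
  ∫ x in Sd d, (kappa s b x) ^ 2

/-- Second partial derivative `∂² m / ∂ s_k ∂ s_ℓ` at `s`. -/
def d2 {d : ℕ} (m : (Fin d → ℝ) → ℝ) (k l : Fin d) (s : Fin d → ℝ) : ℝ :=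
  fderiv ℝ (fun x => fderiv ℝ m x (Pi.single l 1)) s (Pi.single k 1)

/-- The function `h_J(s)` from the paper. -/
def hJfun {d : ℕ} (m : (Fin d → ℝ) → ℝ) (J : Finset (Fin d)) (lam : Fin d → ℝ)
    (s : Fin d → ℝ) : ℝ :=
  if J = Finset.univ then
    ∑ k, ∑ l, (1 / 2 : ℝ) * ((lam k + 1) * (if k = l then 1 else 0) + 1) * d2 m k l s
  else
    ∑ k ∈ Jᶜ, ∑ l ∈ Jᶜ, (1 / 2 : ℝ) * ((if k = l then s k else 0) - s k * s l) * d2 m k l s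

/-- The function `ψ_J(s)` from the paper. -/
def psiJ {d : ℕ} (J : Finset (Fin d)) (s : Fin d → ℝ) : ℝ :=
  ((4 * π) ^ ((d : ℝ) - J.card) * (1 - ∑ i, s i) * ∏ i ∈ Jᶜ, s i) ^ (-(1 : ℝ) / 2)

/-- The product `∏_{i ∈ J} Γ(2λ_i+1) / (2^{2λ_i+1} Γ(λ_i+1)²)`. -/
def gamProd {d : ℕ} (J : Finset (Fin d)) (lam : Fin d → ℝ) : ℝ :=
  ∏ i ∈ J, Gamma (2 * lam i + 1) / ((2 : ℝ) ^ (2 * lam i + 1) * Gamma (lam i + 1) ^ 2)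

/-- The local linear smoother with Dirichlet kernel. -/
def mLL {d n : ℕ} (b : ℝ) (X : Fin n → Fin d → ℝ) (Y : Fin n → ℝ) (s : Fin d → ℝ) : ℝ :=
  let 𝒳 : Matrix (Fin n) (Fin (d + 1)) ℝ :=
    Matrix.of fun i => Fin.cases 1 (fun k => X i k - s k)
  let W : Matrix (Fin n) (Fin n) ℝ := Matrix.diagonal fun i => kappa s b (X i)
  ((𝒳ᵀ * W * 𝒳)⁻¹ *ᵥ (𝒳ᵀ *ᵥ (W *ᵥ Y))) 0

/-- The Nadaraya–Watson estimator with Dirichlet kernel. -/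
def mNW {d n : ℕ} (b : ℝ) (X : Fin n → Fin d → ℝ) (Y : Fin n → ℝ) (s : Fin d → ℝ) : ℝ :=
  (∑ i, Y i * kappa s b (X i)) / ∑ j, kappa s b (X j)

/-- Central second moment `C_b(s; k, ℓ)` of the Dirichlet kernel. -/
def CbM {d : ℕ} (b : ℝ) (s : Fin d → ℝ) (k l : Fin d) : ℝ :=
  ∫ x in Sd d, (x k - s k) * (x l - s l) * kappa s b x

end

set_option maxHeartbeats 1000000

section AbAux

lemma cGamma_real (r : ℝ) : Complex.Gamma ((r:ℂ)) = ((Gamma r : ℝ) : ℂ) :=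
  Complex.Gamma_ofReal r

lemma scaled_beta {p q R : ℝ} (hp : 0 < p) (hq : 0 < q) (hR : 0 < R) :
    ∫ y in (0:ℝ)..R, y ^ p * (R - y) ^ q
      = R ^ (p + q + 1) * (Gamma (p + 1) * Gamma (q + 1) / Gamma (p + q + 2)) := by
  have harg : (p:ℂ) + 1 + ((q:ℂ) + 1) = ((p + q + 2 : ℝ) : ℂ) := by push_cast; ring
  have harg1 : (p:ℂ) + 1 = ((p + 1 : ℝ) : ℂ) := by push_cast; ring
  have harg2 : (q:ℂ) + 1 = ((q + 1 : ℝ) : ℂ) := by push_cast; ring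
  have hGne : Complex.Gamma ((p:ℂ) + 1 + ((q:ℂ) + 1)) ≠ 0 := by
    rw [harg, cGamma_real]
    exact_mod_cast Real.Gamma_ne_zero (fun m => by nlinarith [Nat.cast_nonneg (α := ℝ) m])
  have hbeta : Complex.betaIntegral ((p:ℂ)+1) ((q:ℂ)+1)
      = Complex.Gamma ((p:ℂ)+1) * Complex.Gamma ((q:ℂ)+1) / Complex.Gamma ((p:ℂ)+1+((q:ℂ)+1)) := by
    rw [Complex.Gamma_mul_Gamma_eq_betaIntegral (by simp; linarith) (by simp; linarith)]
    field_simp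
  have key := Complex.betaIntegral_scaled ((p:ℂ)+1) ((q:ℂ)+1) hR
  have hL : (∫ x in (0:ℝ)..R, (x:ℂ) ^ ((p:ℂ)+1-1) * ((R:ℂ) - (x:ℂ)) ^ ((q:ℂ)+1-1))
      = ((∫ y in (0:ℝ)..R, y ^ p * (R - y) ^ q : ℝ) : ℂ) := by
    rw [← intervalIntegral.integral_ofReal]
    refine intervalIntegral.integral_congr (fun x hx => ?_)
    rw [Set.uIcc_of_le hR.le] at hx
    rw [add_sub_cancel_right, add_sub_cancel_right, Complex.ofReal_mul,
      ← Complex.ofReal_cpow hx.1, ← Complex.ofReal_sub,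
      ← Complex.ofReal_cpow (by linarith [hx.2])]
  have hR' : ((R:ℂ) ^ ((p:ℂ)+1+((q:ℂ)+1)-1)) = ((R ^ (p+q+1) : ℝ) : ℂ) := by
    rw [Complex.ofReal_cpow hR.le]
    push_cast
    ring_nf
  rw [hL, hbeta, hR', harg, harg1, harg2, cGamma_real, cGamma_real, cGamma_real] at key
  exact_mod_cast key

def Tset (d : ℕ) : Set (Fin d → ℝ) := {x | (∀ i, 0 ≤ x i) ∧ ∑ i, x i ≤ 1}

lemma Tset_eq (d : ℕ) :
    Tset d = (⋂ i, {x : Fin d → ℝ | 0 ≤ x i}) ∩ {x : Fin d → ℝ | ∑ i, x i ≤ 1} := by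
  ext x; simp [Tset, Set.mem_iInter]

lemma measurable_sum_pi (d : ℕ) : Measurable (fun x : Fin d → ℝ => ∑ i, x i) :=
  Finset.measurable_sum _ fun i _ => measurable_pi_apply i

lemma continuous_sum_pi (d : ℕ) : Continuous (fun x : Fin d → ℝ => ∑ i, x i) :=
  continuous_finset_sum _ fun i _ => continuous_apply i

lemma Tset_measurable (d : ℕ) : MeasurableSet (Tset d) := by
  rw [Tset_eq]
  exact (MeasurableSet.iInter fun i =>
      measurableSet_le measurable_const (measurable_pi_apply i)).inter
    (measurableSet_le (measurable_sum_pi d) measurable_const)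

lemma continuous_rpow_pos {p : ℝ} (hp : 0 < p) : Continuous (fun t : ℝ => t ^ p) :=
  continuous_iff_continuousAt.mpr fun t => Real.continuousAt_rpow_const t p (Or.inr hp.le)

lemma Tset_isCompact (d : ℕ) : IsCompact (Tset d) := by
  refine IsCompact.of_isClosed_subset (isCompact_Icc (a := (0 : Fin d → ℝ)) (b := 1)) ?_ ?_
  · rw [Tset_eq]
    exact (isClosed_iInter fun i => isClosed_le continuous_const (continuous_apply i)).inter
      (isClosed_le (continuous_sum_pi d) continuous_const)
  · rintro x ⟨hx0, hx1⟩
    refine ⟨fun i => hx0 i, fun i => ?_⟩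
    calc x i ≤ ∑ j, x j := Finset.single_le_sum (fun j _ => hx0 j) (Finset.mem_univ i)
    _ ≤ 1 := hx1

lemma F_continuous {d : ℕ} {a : Fin d → ℝ} (ha : ∀ i, 0 < a i) {c : ℝ} (hc : 0 < c) :
    Continuous (fun x : Fin d → ℝ => (∏ i, x i ^ a i) * (1 - ∑ i, x i) ^ c) := by
  apply Continuous.mul
  · exact continuous_finset_prod _ fun i _ => (continuous_rpow_pos (ha i)).comp (continuous_apply i)
  · exact (continuous_rpow_pos hc).comp (continuous_const.sub (continuous_sum_pi d))

lemma F_integrableOn {d : ℕ} {a : Fin d → ℝ} (ha : ∀ i, 0 < a i) {c : ℝ} (hc : 0 < c) :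
    IntegrableOn (fun x : Fin d → ℝ => (∏ i, x i ^ a i) * (1 - ∑ i, x i) ^ c) (Tset d) :=
  ((F_continuous ha hc).continuousOn).integrableOn_compact (Tset_isCompact d)

lemma scaled_beta_Icc {p q R : ℝ} (hp : 0 < p) (hq : 0 < q) (hR : 0 ≤ R) :
    ∫ y in Set.Icc (0:ℝ) R, y ^ p * (R - y) ^ q
      = R ^ (p + q + 1) * (Gamma (p + 1) * Gamma (q + 1) / Gamma (p + q + 2)) := by
  rcases eq_or_lt_of_le hR with h | h
  · subst h
    simp [Set.Icc_self]
    rw [Real.zero_rpow (by positivity)]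
    · simp
  · rw [integral_Icc_eq_integral_Ioc, ← intervalIntegral.integral_of_le hR,
      scaled_beta hp hq h]

lemma Gamma_add_half_le {x : ℝ} (hx : 0 < x) : Gamma (x + 1/2) ≤ Gamma x * Real.sqrt x := by
  have hx1 : (0:ℝ) < x + 1 := by linarith
  have hGx : 0 < Gamma x := Gamma_pos_of_pos hx
  have hGx1 : 0 < Gamma (x+1) := Gamma_pos_of_pos hx1
  have h := Real.convexOn_log_Gamma.2 (Set.mem_Ioi.mpr hx) (Set.mem_Ioi.mpr hx1)
    (by norm_num : (0:ℝ) ≤ (1/2:ℝ)) (by norm_num : (0:ℝ) ≤ (1/2:ℝ)) (by norm_num)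
  simp only [smul_eq_mul, Function.comp_apply] at h
  rw [show (1/2:ℝ) * x + (1/2:ℝ) * (x+1) = x + 1/2 by ring] at h
  have h2 : Gamma (x + 1/2) ≤ exp ((1/2) * log (Gamma x) + (1/2) * log (Gamma (x+1))) := by
    have h3 := Real.exp_le_exp.mpr h
    rwa [Real.exp_log (Gamma_pos_of_pos (by linarith))] at h3
  have h4 : exp ((1/2) * log (Gamma x) + (1/2) * log (Gamma (x+1)))
      = Real.sqrt (Gamma x) * Real.sqrt (Gamma (x+1)) := by
    rw [Real.exp_add, Real.sqrt_eq_rpow, Real.sqrt_eq_rpow,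
      Real.rpow_def_of_pos hGx, Real.rpow_def_of_pos hGx1]
    ring_nf
  rw [h4, Real.Gamma_add_one hx.ne'] at h2
  calc Gamma (x + 1/2) ≤ Real.sqrt (Gamma x) * Real.sqrt (x * Gamma x) := h2
    _ = Gamma x * Real.sqrt x := by
        rw [Real.sqrt_mul hx.le, ← mul_assoc, mul_comm (Real.sqrt (Gamma x)) (Real.sqrt x),
          mul_assoc, Real.mul_self_sqrt hGx.le, mul_comm]

lemma Gamma_step_le {x : ℝ} (hx : 0 < x) :
    ∀ n : ℕ, Gamma (x + n/2) ≤ Gamma x * (x + n/2) ^ ((n:ℝ)/2)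
  | 0 => by simp
  | (n+1) => by
    have hy : 0 < x + (n:ℝ)/2 := by positivity
    have hcast : ((n+1:ℕ):ℝ) = (n:ℝ) + 1 := by push_cast; ring
    rw [hcast]
    have h1 : Gamma (x + ((n:ℝ)+1)/2) ≤ Gamma (x + (n:ℝ)/2) * Real.sqrt (x + (n:ℝ)/2) := by
      have := Gamma_add_half_le hy
      rwa [show x + (n:ℝ)/2 + 1/2 = x + ((n:ℝ)+1)/2 by ring] at this
    have h2 : Gamma (x + (n:ℝ)/2) * Real.sqrt (x + (n:ℝ)/2)
        ≤ (Gamma x * (x + (n:ℝ)/2) ^ ((n:ℝ)/2)) * Real.sqrt (x + (n:ℝ)/2) :=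
      mul_le_mul_of_nonneg_right (Gamma_step_le hx n) (Real.sqrt_nonneg _)
    have h3 : (Gamma x * (x + (n:ℝ)/2) ^ ((n:ℝ)/2)) * Real.sqrt (x + (n:ℝ)/2)
        = Gamma x * (x + (n:ℝ)/2) ^ (((n:ℝ)+1)/2) := by
      rw [Real.sqrt_eq_rpow, mul_assoc, ← Real.rpow_add hy]
      ring_nf
    have h4 : (x + (n:ℝ)/2) ^ (((n:ℝ)+1)/2) ≤ (x + ((n:ℝ)+1)/2) ^ (((n:ℝ)+1)/2) :=
      Real.rpow_le_rpow hy.le (by linarith) (by positivity)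
    calc Gamma (x + ((n:ℝ)+1)/2) ≤ Gamma x * (x + (n:ℝ)/2) ^ (((n:ℝ)+1)/2) := by
          rw [← h3]; exact h1.trans h2
      _ ≤ Gamma x * (x + ((n:ℝ)+1)/2) ^ (((n:ℝ)+1)/2) :=
          mul_le_mul_of_nonneg_left h4 (Real.Gamma_pos_of_pos hx).le

lemma two_rpow_two_mul (y : ℝ) : (2:ℝ) ^ (2 * y) = (4:ℝ) ^ y := by
  rw [show (4:ℝ) = (2:ℝ) ^ (2:ℝ) by norm_num [Real.rpow_natCast], ← Real.rpow_mul (by norm_num)]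

lemma Gamma_central_le {a : ℝ} (ha : 0 < a) :
    Gamma (2*a+1) ≤ Gamma (a+1)^2 * ((4:ℝ)^a / Real.sqrt (π * a)) := by
  have hdup := Real.Gamma_mul_Gamma_add_half (a + 1/2)
  rw [show (2:ℝ) * (a + 1/2) = 2*a+1 by ring, show a + 1/2 + 1/2 = a + 1 by ring,
    show (1:ℝ) - (2*a+1) = -(2*a) by ring] at hdup
  -- hdup : Γ(a+1/2) * Γ(a+1) = Γ(2a+1) * 2^(-(2a)) * √π
  have hGa1 : 0 < Gamma (a+1) := Gamma_pos_of_pos (by linarith)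
  have hGhalf : Gamma (a + 1/2) ≤ Gamma (a+1) / Real.sqrt a := by
    rw [Real.Gamma_add_one ha.ne', mul_comm a (Gamma a), mul_div_assoc, Real.div_sqrt]
    exact Gamma_add_half_le ha
  have h2pos : (0:ℝ) < (2:ℝ) ^ (-(2*a)) := Real.rpow_pos_of_pos (by norm_num) _
  have hG2 : Gamma (2*a+1) = Gamma (a+1/2) * Gamma (a+1) * (2:ℝ)^(2*a) / Real.sqrt π := by
    rw [hdup]
    rw [Real.rpow_neg (by norm_num : (0:ℝ) ≤ 2)]
    field_simp
  rw [hG2]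
  have hsqrtpi : (0:ℝ) < Real.sqrt π := Real.sqrt_pos.mpr Real.pi_pos
  rw [div_le_iff₀ hsqrtpi]
  have key : Gamma (a+1/2) * Gamma (a+1) * (2:ℝ)^(2*a)
      ≤ (Gamma (a+1) / Real.sqrt a) * Gamma (a+1) * (2:ℝ)^(2*a) := by
    apply mul_le_mul_of_nonneg_right _ (Real.rpow_nonneg (by norm_num) _)
    exact mul_le_mul_of_nonneg_right hGhalf hGa1.le
  refine key.trans (le_of_eq ?_)
  rw [two_rpow_two_mul, Real.sqrt_mul Real.pi_pos.le]
  have hsa : (0:ℝ) < Real.sqrt a := Real.sqrt_pos.mpr ha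
  field_simp

lemma dirichlet_integral : ∀ (d : ℕ) (a : Fin d → ℝ), (∀ i, 0 < a i) → ∀ (c : ℝ), 0 < c →
    ∫ x in Tset d, ((∏ i, x i ^ a i) * (1 - ∑ i, x i) ^ c)
      = (∏ i, Gamma (a i + 1)) * Gamma (c + 1) / Gamma ((∑ i, a i) + c + d + 1) := by
  intro d
  induction d with
  | zero =>
    intro a ha c hc
    have hT : Tset 0 = Set.univ := by
      ext x; simp [Tset]
    have hvol : (volume : Measure (Fin 0 → ℝ)) Set.univ = 1 := by
      rw [volume_pi, Measure.pi_univ]; simp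
    rw [hT, Measure.restrict_univ]
    rw [integral_unique]
    simp [hvol, Real.one_rpow]
    rw [div_self (Real.Gamma_ne_zero (fun m => by nlinarith [Nat.cast_nonneg (α := ℝ) m]))]
    simp [Measure.real, hvol]
  | succ d IH =>
    intro a ha c hc
    set F : (Fin (d+1) → ℝ) → ℝ := fun x => (∏ i, x i ^ a i) * (1 - ∑ i, x i) ^ c with hF
    set a' : Fin d → ℝ := fun j => a ((0 : Fin (d+1)).succAbove j) with ha'def
    have ha' : ∀ j, 0 < a' j := fun j => ha _
    have ha0 : 0 < a 0 := ha 0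
    set c' : ℝ := a 0 + c + 1 with hc'def
    have hc' : 0 < c' := by positivity
    set B0 : ℝ := Gamma (a 0 + 1) * Gamma (c + 1) / Gamma (a 0 + c + 2) with hB0
    set e := MeasurableEquiv.piFinSuccAbove (fun _ : Fin (d+1) => ℝ) 0 with he
    have hTm := Tset_measurable (d+1)
    set g : (Fin (d+1) → ℝ) → ℝ := (Tset (d+1)).indicator F with hg
    have hgi : Integrable g := (integrable_indicator_iff hTm).mpr (F_integrableOn ha hc)
    have hmp : MeasurePreserving e.symm volume volume :=
      (volume_preserving_piFinSuccAbove (fun _ : Fin (d+1) => ℝ) 0).symm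
    have hcomp : Integrable (g ∘ e.symm) :=
      (hmp.integrable_comp_emb e.symm.measurableEmbedding).mpr hgi
    have hesymm : ∀ (y : ℝ) (z : Fin d → ℝ), e.symm (y, z) = Fin.insertNth 0 y z := by
      intro y z
      rw [he, MeasurableEquiv.piFinSuccAbove_symm_apply]
      rfl
    -- inner integral computation
    have inner_eq : ∀ z : Fin d → ℝ, (∫ y : ℝ, g (e.symm (y, z)))
        = (Tset d).indicator
            (fun z => ((∏ j, z j ^ a' j) * (1 - ∑ j, z j) ^ c') * B0) z := by
      intro z
      by_cases hz : z ∈ Tset d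
      · set R : ℝ := 1 - ∑ j, z j with hR
        have hR0 : 0 ≤ R := by simp [hR]; exact hz.2
        have hmem : ∀ y : ℝ, Fin.insertNth 0 y z ∈ Tset (d+1) ↔ y ∈ Set.Icc 0 R := by
          intro y
          constructor
          · rintro ⟨h1, h2⟩
            refine ⟨by simpa using h1 0, ?_⟩
            rw [Fin.sum_univ_succAbove _ 0] at h2
            simp only [Fin.insertNth_apply_same, Fin.insertNth_apply_succAbove] at h2
            simp [hR]; linarith
          · rintro ⟨hy0, hyR⟩
            constructor
            · intro i
              rcases eq_or_ne i 0 with rfl | hne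
              · simpa using hy0
              · obtain ⟨j, rfl⟩ := Fin.exists_succAbove_eq hne
                simpa [Fin.insertNth_apply_succAbove] using hz.1 j
            · rw [Fin.sum_univ_succAbove _ 0]
              simp only [Fin.insertNth_apply_same, Fin.insertNth_apply_succAbove]
              simp [hR] at hyR; linarith
        have hF_eval : ∀ y : ℝ, F (Fin.insertNth 0 y z)
            = (∏ j, z j ^ a' j) * (y ^ (a 0) * (R - y) ^ c) := by
          intro y
          rw [hF]
          simp only [Fin.prod_univ_succAbove _ (0 : Fin (d+1)),
            Fin.sum_univ_succAbove _ (0 : Fin (d+1)),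
            Fin.insertNth_apply_same, Fin.insertNth_apply_succAbove]
          rw [hR, ha'def]
          ring_nf
        have : (fun y : ℝ => g (e.symm (y, z)))
            = (Set.Icc 0 R).indicator (fun y => F (Fin.insertNth 0 y z)) := by
          ext y
          rw [hesymm, hg]
          by_cases hy : y ∈ Set.Icc 0 R
          · rw [Set.indicator_of_mem ((hmem y).mpr hy), Set.indicator_of_mem hy]
          · rw [Set.indicator_of_notMem (fun h => hy ((hmem y).mp h)),
              Set.indicator_of_notMem hy]
        rw [this, integral_indicator measurableSet_Icc]
        have : ∫ y in Set.Icc 0 R, F (Fin.insertNth 0 y z)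
            = (∏ j, z j ^ a' j) * ∫ y in Set.Icc 0 R, y ^ (a 0) * (R - y) ^ c := by
          rw [← integral_const_mul]
          exact setIntegral_congr_fun measurableSet_Icc fun y _ => hF_eval y
        rw [this, scaled_beta_Icc ha0 hc hR0, Set.indicator_of_mem hz]
        rw [hB0]
        have : a 0 + c + 1 = c' := rfl
        rw [this]
        rw [hR]; ring
      · -- z ∉ Tset d
        rw [Set.indicator_of_notMem hz]
        have : (fun y : ℝ => g (e.symm (y, z))) = fun _ => (0:ℝ) := by
          ext y
          rw [hesymm, hg, Set.indicator_of_notMem]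
          intro hmem
          apply hz
          constructor
          · intro j
            have := hmem.1 ((0 : Fin (d+1)).succAbove j)
            simpa [Fin.insertNth_apply_succAbove] using this
          · have h2 := hmem.2
            rw [Fin.sum_univ_succAbove _ 0] at h2
            simp only [Fin.insertNth_apply_same, Fin.insertNth_apply_succAbove] at h2
            have h0 : 0 ≤ y := by simpa using hmem.1 0
            linarith
        rw [this, integral_zero]
    calc ∫ x in Tset (d+1), F x = ∫ x, g x := (integral_indicator hTm).symm
      _ = ∫ p : ℝ × (Fin d → ℝ), g (e.symm p) :=
          (hmp.integral_comp e.symm.measurableEmbedding g).symm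
      _ = ∫ z : Fin d → ℝ, ∫ y : ℝ, g (e.symm (y, z)) := integral_prod_symm _ hcomp
      _ = ∫ z : Fin d → ℝ, (Tset d).indicator
            (fun z => ((∏ j, z j ^ a' j) * (1 - ∑ j, z j) ^ c') * B0) z := by
          exact integral_congr_ae (Filter.Eventually.of_forall inner_eq)
      _ = (∫ z in Tset d, ((∏ j, z j ^ a' j) * (1 - ∑ j, z j) ^ c')) * B0 := by
          rw [integral_indicator (Tset_measurable d), ← integral_mul_const]
      _ = ((∏ j, Gamma (a' j + 1)) * Gamma (c' + 1) / Gamma ((∑ j, a' j) + c' + d + 1)) * B0 := by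
          rw [IH a' ha' c' hc']
      _ = (∏ i, Gamma (a i + 1)) * Gamma (c + 1) / Gamma ((∑ i, a i) + c + ↑(d+1) + 1) := by
          rw [Fin.prod_univ_succAbove (fun i => Gamma (a i + 1)) 0,
            Fin.sum_univ_succAbove a 0, hB0, hc'def]
          have h1 : Gamma (a 0 + c + 2) ≠ 0 :=
            Real.Gamma_ne_zero (fun m => by nlinarith [Nat.cast_nonneg (α := ℝ) m])
          have h2 : (∑ j, a' j) + (a 0 + c + 1) + (d:ℝ) + 1
              = (a 0 + ∑ j, a ((0 : Fin (d+1)).succAbove j)) + c + ((d:ℕ)+1 : ℕ) + 1 := by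
            rw [ha'def]; push_cast; ring
          have h3 : a 0 + c + 1 + 1 = a 0 + c + 2 := by ring
          have key : ∀ X Y Z W : ℝ, Z ≠ 0 → (X * Z / Y) * (W / Z) = X * W / Y := by
            intro X Y Z W hZ
            calc (X * Z / Y) * (W / Z) = (Z / Z) * (X * W / Y) := by ring
            _ = X * W / Y := by rw [div_self hZ, one_mul]
          rw [h2, h3]
          rw [key (∏ j, Gamma (a' j + 1)) _ _ (Gamma (a 0 + 1) * Gamma (c + 1)) h1]
          rw [ha'def]
          ring

lemma Sd_eq_Tset (d : ℕ) : Sd d = Tset d := by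
  ext x
  constructor
  · rintro ⟨h1, h2⟩; exact ⟨fun i => (h1 i).1, h2⟩
  · rintro ⟨h1, h2⟩
    refine ⟨fun i => ⟨h1 i, ?_⟩, h2⟩
    calc x i ≤ ∑ j, x j := Finset.single_le_sum (fun j _ => h1 j) (Finset.mem_univ i)
      _ ≤ 1 := h2

lemma Gamma_pos' {y : ℝ} (hy : 0 < y) : 0 < Gamma y := Real.Gamma_pos_of_pos hy

lemma Adir_eq {d : ℕ} {b : ℝ} (hb : 0 < b) {s : Fin d → ℝ} (hs : ∀ i, 0 < s i)
    (hsum : ∑ i, s i < 1) :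
    Adir b s = (Gamma (1/b + d + 1)^2 / Gamma (2*(1/b) + d + 1))
      * ((Gamma (2*((1 - ∑ i, s i)/b) + 1) / Gamma ((1 - ∑ i, s i)/b + 1)^2)
      * ∏ i, (Gamma (2*(s i / b) + 1) / Gamma (s i / b + 1)^2)) := by
  have ha0 : 0 < (1 - ∑ i, s i)/b := div_pos (by linarith) hb
  have hai : ∀ i, 0 < s i / b := fun i => div_pos (hs i) hb
  have hargsum : (∑ i, (s i / b + 1)) + ((1 - ∑ i, s i)/b + 1) = 1/b + (d:ℝ) + 1 := by
    rw [Finset.sum_add_distrib, Finset.sum_const, Finset.card_univ, Fintype.card_fin,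
      ← Finset.sum_div]
    field_simp
    ring
  have hC : ∀ x, kappa s b x
      = (Gamma (1/b + (d:ℝ) + 1) / (Gamma ((1 - ∑ i, s i)/b + 1) * ∏ i, Gamma (s i / b + 1)))
        * (1 - ∑ i, x i) ^ ((1 - ∑ i, s i)/b) * ∏ i, (x i) ^ (s i / b) := by
    intro x
    rw [kappa, Kdir, hargsum]
    simp only [add_sub_cancel_right]
  have hpt : ∀ x ∈ Tset d, (kappa s b x)^2
      = (Gamma (1/b + (d:ℝ) + 1) / (Gamma ((1 - ∑ i, s i)/b + 1) * ∏ i, Gamma (s i / b + 1)))^2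
        * ((∏ i, (x i) ^ (2 * (s i / b))) * (1 - ∑ i, x i) ^ (2 * ((1 - ∑ i, s i)/b))) := by
    intro x hx
    rw [hC x]
    have h1 : ((1 - ∑ i, x i) ^ ((1 - ∑ i, s i)/b))^2 = (1 - ∑ i, x i) ^ (2 * ((1 - ∑ i, s i)/b)) := by
      rw [sq, ← Real.rpow_add' (by linarith [hx.2]) (ne_of_gt (by linarith [ha0]))]
      ring_nf
    have h2 : (∏ i, (x i) ^ (s i / b))^2 = ∏ i, (x i) ^ (2 * (s i / b)) := by
      rw [← Finset.prod_pow]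
      refine Finset.prod_congr rfl fun i _ => ?_
      rw [sq, ← Real.rpow_add' (hx.1 i) (ne_of_gt (by linarith [hai i]))]
      ring_nf
    rw [mul_pow, mul_pow, h1, h2]
    ring
  rw [Adir, Sd_eq_Tset]
  rw [setIntegral_congr_fun (Tset_measurable d) hpt, integral_const_mul]
  rw [dirichlet_integral d (fun i => 2 * (s i / b)) (fun i => by linarith [hai i]) _ (by linarith [ha0])]
  have hargsum2 : (∑ i, 2 * (s i / b)) + 2*((1 - ∑ i, s i)/b) + d + 1 = 2*(1/b) + (d:ℝ) + 1 := by
    rw [← Finset.mul_sum, ← Finset.sum_div]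
    field_simp
    ring
  rw [hargsum2]
  have hG0 : Gamma ((1 - ∑ i, s i)/b + 1) ≠ 0 := (Gamma_pos' (by linarith)).ne'
  have hP : (∏ i, Gamma (s i / b + 1)) ≠ 0 :=
    Finset.prod_ne_zero_iff.mpr fun i _ => (Gamma_pos' (by have := hai i; linarith)).ne'
  have hD : Gamma (2*(1/b) + (d:ℝ) + 1) ≠ 0 := (Gamma_pos' (by positivity)).ne'
  rw [Finset.prod_div_distrib]
  have hPP : ∏ i, Gamma (s i / b + 1)^2 = (∏ i, Gamma (s i / b + 1))^2 := Finset.prod_pow _ _ _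
  rw [hPP]
  field_simp

lemma front_bound {t : ℝ} (ht : 0 < t) (d : ℕ) :
    Gamma (t + d + 1)^2 / Gamma (2*t + d + 1)
      ≤ Real.sqrt π * (t + d + 1) ^ ((d:ℝ) + 1/2) / (2:ℝ) ^ (2*t + d) := by
  set s₀ : ℝ := t + ((d:ℝ)+1)/2 with hs₀
  have hs₀pos : 0 < s₀ := by positivity
  have hs₀'pos : 0 < s₀ + 1/2 := by positivity
  have hdup := Real.Gamma_mul_Gamma_add_half s₀
  rw [show 2 * s₀ = 2*t + d + 1 by rw [hs₀]; ring,
    show (1:ℝ) - (2*t + d + 1) = -(2*t + d) by ring] at hdup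
  have hG2 : Gamma (2*t + (d:ℝ) + 1)
      = Gamma s₀ * Gamma (s₀ + 1/2) * (2:ℝ)^(2*t + (d:ℝ)) / Real.sqrt π := by
    rw [Real.rpow_neg (by norm_num : (0:ℝ) ≤ 2)] at hdup
    have h2 : ((2:ℝ)^(2*t + (d:ℝ))) ≠ 0 := (Real.rpow_pos_of_pos (by norm_num) _).ne'
    have hpi : Real.sqrt π ≠ 0 := (Real.sqrt_pos.mpr Real.pi_pos).ne'
    set A := Gamma s₀ with hA
    set B := Gamma (s₀ + 1/2) with hB
    set P : ℝ := (2:ℝ)^(2*t + (d:ℝ)) with hPdef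
    set G : ℝ := Gamma (2*t + (d:ℝ) + 1) with hGdef
    field_simp at hdup ⊢
    linear_combination (-1 : ℝ) * hdup
  have h1 : Gamma (t + d + 1) ≤ Gamma s₀ * (t + d + 1) ^ (((d:ℝ)+1)/2) := by
    have := Gamma_step_le hs₀pos (d+1)
    rw [show s₀ + ((d+1:ℕ):ℝ)/2 = t + d + 1 by rw [hs₀]; push_cast; ring] at this
    rw [show (((d+1:ℕ)):ℝ)/2 = ((d:ℝ)+1)/2 by push_cast; ring] at this
    exact this
  have h2 : Gamma (t + d + 1) ≤ Gamma (s₀ + 1/2) * (t + d + 1) ^ ((d:ℝ)/2) := by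
    have := Gamma_step_le hs₀'pos d
    rw [show s₀ + 1/2 + (d:ℝ)/2 = t + d + 1 by rw [hs₀]; ring] at this
    exact this
  have hTpos : (0:ℝ) < t + d + 1 := by positivity
  have hGpos : 0 < Gamma (t + d + 1) := Gamma_pos_of_pos hTpos
  have hnum : Gamma (t + d + 1)^2
      ≤ Gamma s₀ * Gamma (s₀ + 1/2) * (t + d + 1) ^ ((d:ℝ) + 1/2) := by
    have hmul := mul_le_mul h1 h2 hGpos.le (by positivity)
    rw [← sq] at hmul
    refine hmul.trans (le_of_eq ?_)
    rw [mul_mul_mul_comm, ← Real.rpow_add hTpos,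
      show ((d:ℝ)+1)/2 + (d:ℝ)/2 = (d:ℝ) + 1/2 by ring]
  rw [hG2, div_div_eq_mul_div]
  have hden : (0:ℝ) < Gamma s₀ * Gamma (s₀ + 1/2) * (2:ℝ)^(2*t + (d:ℝ)) := by
    have := Gamma_pos_of_pos hs₀pos
    have := Gamma_pos_of_pos hs₀'pos
    have := Real.rpow_pos_of_pos (show (0:ℝ) < 2 by norm_num) (2*t + (d:ℝ))
    positivity
  rw [div_le_div_iff₀ hden (by positivity)]
  have hgoal : Gamma (t + ↑d + 1) ^ 2 * √π * (2:ℝ) ^ (2 * t + (d:ℝ))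
      ≤ (Gamma s₀ * Gamma (s₀ + 1/2) * (t + d + 1) ^ ((d:ℝ) + 1/2)) * √π * (2:ℝ) ^ (2*t + (d:ℝ)) := by
    have := mul_le_mul_of_nonneg_right
      (mul_le_mul_of_nonneg_right hnum (Real.sqrt_nonneg π))
      (Real.rpow_nonneg (by norm_num : (0:ℝ) ≤ 2) (2*t + (d:ℝ)))
    exact this
  refine hgoal.trans (le_of_eq ?_)
  ring

lemma chord (n : ℕ) {b : ℝ} (hb0 : 0 ≤ b) (hb1 : b ≤ 1) :
    (1+b)^n ≤ 1 + ((2:ℝ)^n - 1) * b := by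
  induction n with
  | zero => simp
  | succ n ih =>
    have h2 : (1:ℝ) ≤ 2^n := one_le_pow₀ (by norm_num)
    rw [pow_succ, pow_succ]
    nlinarith [mul_le_mul_of_nonneg_right ih (by linarith : (0:ℝ) ≤ 1 + b),
      mul_nonneg (by linarith : (0:ℝ) ≤ (2:ℝ)^n - 1) (mul_nonneg hb0 (by linarith : (0:ℝ) ≤ 1 - b))]

lemma correction {b : ℝ} (hb0 : 0 < b) (hb1 : b ≤ 1) (d : ℕ) (hd : 0 < d) :
    (1/b + d + 1) ^ ((d:ℝ) + 1/2)
      ≤ (1/b + d) ^ ((d:ℝ) + 1/2) * (1 + (2:ℝ)^(d+1) * b) := by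
  set t : ℝ := 1/b with htdef
  have ht1 : 1 ≤ t := one_le_one_div hb0 hb1
  have htd : (0:ℝ) < t + (d:ℝ) := by positivity
  have hsplit : t + (d:ℝ) + 1 = (t + d) * (1 + 1/(t+d)) := by field_simp
  rw [hsplit, Real.mul_rpow htd.le (by positivity)]
  refine mul_le_mul_of_nonneg_left ?_ (Real.rpow_nonneg htd.le _)
  have hb' : 1/(t+(d:ℝ)) ≤ b := by
    have h1 : 1/(t+(d:ℝ)) ≤ 1/t := by
      apply one_div_le_one_div_of_le (by linarith) (by linarith [Nat.cast_nonneg (α := ℝ) d])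
    have h2 : 1/t = b := by rw [htdef, one_div_one_div]
    linarith
  calc (1 + 1/(t+(d:ℝ))) ^ ((d:ℝ) + 1/2)
      ≤ (1 + b) ^ ((d:ℝ) + 1/2) :=
        Real.rpow_le_rpow (by positivity) (by linarith) (by positivity)
    _ ≤ (1 + b) ^ (((d:ℕ)+1:ℕ):ℝ) := by
        apply Real.rpow_le_rpow_of_exponent_le (by linarith)
        push_cast; linarith
    _ = (1 + b) ^ ((d:ℕ)+1:ℕ) := Real.rpow_natCast _ _
    _ ≤ 1 + ((2:ℝ)^(d+1) - 1) * b := chord (d+1) hb0.le hb1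
    _ ≤ 1 + (2:ℝ)^(d+1) * b := by nlinarith [hb0]

lemma sqrt_prod'' {n : ℕ} (f : Fin n → ℝ) (hf : ∀ i, 0 ≤ f i) :
    Real.sqrt (∏ i, f i) = ∏ i, Real.sqrt (f i) := by
  induction n with
  | zero => simp
  | succ n ih =>
    rw [Fin.prod_univ_succ, Fin.prod_univ_succ, Real.sqrt_mul (hf 0),
      ih (fun i => f i.succ) (fun i => hf i.succ)]

lemma rpow_sum' {x : ℝ} (hx : 0 < x) {n : ℕ} (f : Fin n → ℝ) :
    x ^ (∑ i, f i) = ∏ i, x ^ f i := by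
  induction n with
  | zero => simp
  | succ n ih =>
    rw [Fin.sum_univ_succ, Fin.prod_univ_succ, Real.rpow_add hx, ih (fun i => f i.succ)]

lemma alg_eq {d : ℕ} {b : ℝ} (hb : 0 < b) {s : Fin d → ℝ} (hs : ∀ i, 0 < s i)
    (hsum : ∑ i, s i < 1) :
    (Real.sqrt π * (1/b + d + 1) ^ ((d:ℝ) + 1/2) / (2:ℝ) ^ (2*(1/b) + d))
      * (((4:ℝ)^((1 - ∑ i, s i)/b) / Real.sqrt (π * ((1 - ∑ i, s i)/b)))
      * ∏ i, ((4:ℝ)^(s i / b) / Real.sqrt (π * (s i / b))))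
    = b ^ (((d:ℝ)+1)/2) * (1/b + (d:ℝ) + 1) ^ ((d:ℝ)+1/2)
      / ((4*π)^((d:ℝ)/2) * Real.sqrt ((1 - ∑ i, s i) * ∏ i, s i)) := by
  have h1σ : (0:ℝ) < 1 - ∑ i, s i := by linarith
  have hP : (0:ℝ) < ∏ i, s i := Finset.prod_pos (fun i _ => hs i)
  have hQ : (0:ℝ) < Real.sqrt ((1 - ∑ i, s i) * ∏ i, s i) :=
    Real.sqrt_pos.mpr (by positivity)
  -- product of 4-powers
  have e1 : ∏ i, (4:ℝ)^(s i / b) = (4:ℝ)^((∑ i, s i)/b) := by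
    rw [Finset.sum_div, rpow_sum' (by norm_num : (0:ℝ) < 4)]
  -- product of sqrts
  have e2 : ∏ i, Real.sqrt (π * (s i / b))
      = Real.sqrt (π^(d:ℕ) * ((∏ i, s i) * (b⁻¹)^(d:ℕ))) := by
    rw [← sqrt_prod'' _ (fun i => by have := hs i; positivity)]
    congr 1
    rw [Finset.prod_mul_distrib, Finset.prod_const, Finset.card_univ, Fintype.card_fin]
    congr 1
    simp only [div_eq_mul_inv]
    rw [Finset.prod_mul_distrib, Finset.prod_const, Finset.card_univ, Fintype.card_fin]
  rw [Finset.prod_div_distrib, e1, e2]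
  -- combine 4-powers
  have e3 : (4:ℝ)^((1 - ∑ i, s i)/b) * (4:ℝ)^((∑ i, s i)/b) = (4:ℝ)^(1/b) := by
    rw [← Real.rpow_add (by norm_num : (0:ℝ) < 4)]
    congr 1
    field_simp
    ring
  -- combine sqrts
  have e4 : Real.sqrt (π * ((1 - ∑ i, s i)/b)) * Real.sqrt (π^(d:ℕ) * ((∏ i, s i) * (b⁻¹)^(d:ℕ)))
      = Real.sqrt (π^(d+1:ℕ)) * Real.sqrt ((1 - ∑ i, s i) * ∏ i, s i)
        * Real.sqrt ((b⁻¹)^(d+1:ℕ)) := by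
    rw [← Real.sqrt_mul (by positivity), ← Real.sqrt_mul (by positivity),
      ← Real.sqrt_mul (by positivity)]
    congr 1
    rw [pow_succ, pow_succ]
    field_simp
  have f1 : (2:ℝ)^(2*(1/b)+(d:ℝ)) = (4:ℝ)^(1/b) * (2:ℝ)^(d:ℕ) := by
    rw [Real.rpow_add (by norm_num : (0:ℝ) < 2), two_rpow_two_mul, Real.rpow_natCast]
  have f2 : Real.sqrt ((π:ℝ)^(d+1:ℕ)) = Real.sqrt ((π:ℝ)^(d:ℕ)) * Real.sqrt π := by
    rw [pow_succ, Real.sqrt_mul (by positivity)]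
  have f3 : ((4:ℝ)*π)^((d:ℝ)/2) = (2:ℝ)^(d:ℕ) * Real.sqrt ((π:ℝ)^(d:ℕ)) := by
    rw [show (d:ℝ)/2 = (d:ℝ)*(1/2) by ring, Real.rpow_mul (by positivity),
      Real.rpow_natCast, ← Real.sqrt_eq_rpow, mul_pow,
      Real.sqrt_mul (by positivity), show ((4:ℝ)^(d:ℕ)) = ((2:ℝ)^(d:ℕ))^2 by
        rw [← pow_mul, mul_comm d 2, pow_mul]; norm_num,
      Real.sqrt_sq (by positivity)]
  have f4 : b ^ (((d:ℝ)+1)/2) = (Real.sqrt ((b⁻¹)^(d+1:ℕ)))⁻¹ := by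
    have h5 : Real.sqrt (b^(d+1:ℕ)) = b ^ (((d:ℝ)+1)/2) := by
      rw [Real.sqrt_eq_rpow, ← Real.rpow_natCast b (d+1), ← Real.rpow_mul hb.le]
      congr 1
      push_cast; ring
    have h6 : Real.sqrt (b^(d+1:ℕ)) * Real.sqrt ((b⁻¹)^(d+1:ℕ)) = 1 := by
      rw [← Real.sqrt_mul (by positivity), ← mul_pow, mul_inv_cancel₀ hb.ne', one_pow,
        Real.sqrt_one]
    rw [← h5]
    exact eq_inv_of_mul_eq_one_left (by linear_combination h6)
  -- final assembly
  have e4' : Real.sqrt (π * ((1 - ∑ i, s i)/b)) * Real.sqrt (π^(d:ℕ) * ((∏ i, s i) * (b⁻¹)^(d:ℕ)))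
      = Real.sqrt ((π:ℝ)^(d:ℕ)) * Real.sqrt π * Real.sqrt ((1 - ∑ i, s i) * ∏ i, s i)
        * Real.sqrt ((b⁻¹)^(d+1:ℕ)) := by
    rw [e4, f2]
  rw [f1, f3, f4]
  set A := Real.sqrt π with hA
  set T := (1/b + (d:ℝ) + 1) ^ ((d:ℝ)+1/2) with hT
  set F0 := (4:ℝ)^((1 - ∑ i, s i)/b) with hF0
  set FS := (4:ℝ)^((∑ i, s i)/b) with hFS
  set S1 := Real.sqrt (π * ((1 - ∑ i, s i)/b)) with hS1
  set S2 := Real.sqrt (π^(d:ℕ) * ((∏ i, s i) * (b⁻¹)^(d:ℕ))) with hS2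
  set P1 := Real.sqrt ((π:ℝ)^(d:ℕ)) with hP1
  set PB := Real.sqrt ((b⁻¹)^(d+1:ℕ)) with hPB
  set G := (4:ℝ)^(1/b) with hG
  set twoD := (2:ℝ)^(d:ℕ) with htwoD
  set Q := Real.sqrt ((1 - ∑ i, s i) * ∏ i, s i) with hQdef
  have hAne : A ≠ 0 := (Real.sqrt_pos.mpr Real.pi_pos).ne'
  have hS1ne : S1 ≠ 0 := (Real.sqrt_pos.mpr (by positivity)).ne'
  have hS2ne : S2 ≠ 0 := (Real.sqrt_pos.mpr (by positivity)).ne'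
  have hP1ne : P1 ≠ 0 := (Real.sqrt_pos.mpr (by positivity)).ne'
  have hPBne : PB ≠ 0 := (Real.sqrt_pos.mpr (by positivity)).ne'
  have hGne : G ≠ 0 := (Real.rpow_pos_of_pos (by norm_num) _).ne'
  have htwoDne : twoD ≠ 0 := by positivity
  have hQne : Q ≠ 0 := hQ.ne'
  have hS2eq : S2 = P1 * A * Q * PB / S1 := by
    rw [eq_div_iff hS1ne]
    linear_combination e4'
  rw [hS2eq, ← e3]
  field_simp
  have hF0ne : F0 ≠ 0 := (Real.rpow_pos_of_pos (by norm_num) _).ne'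
  have hFSne : FS ≠ 0 := (Real.rpow_pos_of_pos (by norm_num) _).ne'
  field_simp

lemma central_div_le {a : ℝ} (ha : 0 < a) :
    Gamma (2*a+1) / Gamma (a+1)^2 ≤ (4:ℝ)^a / Real.sqrt (π * a) := by
  have hG : (0:ℝ) < Gamma (a+1) := Gamma_pos_of_pos (by linarith)
  rw [div_le_iff₀ (pow_pos hG 2)]
  calc Gamma (2*a+1) ≤ Gamma (a+1)^2 * ((4:ℝ)^a / Real.sqrt (π * a)) := Gamma_central_le ha
    _ = (4:ℝ)^a / Real.sqrt (π * a) * Gamma (a+1)^2 := by ring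


end AbAux

/-- uniform bound on `A_b(s)` (Lemma A.2, first part). -/
theorem Ab_uniform_bound (d : ℕ) (hd : 0 < d) :
    ∃ C > (0 : ℝ), ∃ b₀ > (0 : ℝ), ∀ b ∈ Set.Ioo (0 : ℝ) b₀, ∀ s ∈ SdInt d,
      0 < Adir b s ∧
      Adir b s ≤ b ^ (((d : ℝ) + 1) / 2) * (1 / b + (d : ℝ)) ^ ((d : ℝ) + 1 / 2) /
          ((4 * π) ^ ((d : ℝ) / 2) * Real.sqrt ((1 - ∑ i, s i) * ∏ i, s i)) *
        (1 + C * b) := by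
  refine ⟨(2:ℝ)^(d+1), by positivity, 1, one_pos, ?_⟩
  rintro b ⟨hb0, hb1⟩ s ⟨hs, hsum⟩
  have ha0 : (0:ℝ) < (1 - ∑ i, s i)/b := div_pos (by linarith) hb0
  have hai : ∀ i, (0:ℝ) < s i / b := fun i => div_pos (hs i) hb0
  have ht : (0:ℝ) < 1/b := by positivity
  have hGX1 : (0:ℝ) < Gamma (1/b + d + 1) := Gamma_pos_of_pos (by positivity)
  have hGX2 : (0:ℝ) < Gamma (2*(1/b) + d + 1) := Gamma_pos_of_pos (by positivity)
  have hGY0n : (0:ℝ) < Gamma (2*((1 - ∑ i, s i)/b) + 1) := Gamma_pos_of_pos (by linarith)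
  have hGY0d : (0:ℝ) < Gamma ((1 - ∑ i, s i)/b + 1) := Gamma_pos_of_pos (by linarith)
  have hGYin : ∀ i, (0:ℝ) < Gamma (2*(s i / b) + 1) :=
    fun i => Gamma_pos_of_pos (by linarith [hai i])
  have hGYid : ∀ i, (0:ℝ) < Gamma (s i / b + 1) :=
    fun i => Gamma_pos_of_pos (by linarith [hai i])
  have hprodpos : (0:ℝ) < ∏ i, (Gamma (2*(s i / b) + 1) / Gamma (s i / b + 1)^2) :=
    Finset.prod_pos fun i _ => div_pos (hGYin i) (pow_pos (hGYid i) 2)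
  constructor
  · rw [Adir_eq hb0 hs hsum]
    have h1 : (0:ℝ) < Gamma (1/b + d + 1)^2 / Gamma (2*(1/b) + d + 1) := by positivity
    have h2 : (0:ℝ) < Gamma (2*((1 - ∑ i, s i)/b) + 1) / Gamma ((1 - ∑ i, s i)/b + 1)^2 := by
      positivity
    exact mul_pos h1 (mul_pos h2 hprodpos)
  · -- step 1: bound each factor
    have hX : Gamma (1/b + d + 1)^2 / Gamma (2*(1/b) + d + 1)
        ≤ Real.sqrt π * (1/b + d + 1) ^ ((d:ℝ) + 1/2) / (2:ℝ) ^ (2*(1/b) + d) :=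
      front_bound ht d
    have hY0 : Gamma (2*((1 - ∑ i, s i)/b) + 1) / Gamma ((1 - ∑ i, s i)/b + 1)^2
        ≤ (4:ℝ)^((1 - ∑ i, s i)/b) / Real.sqrt (π * ((1 - ∑ i, s i)/b)) := central_div_le ha0
    have hYi : ∀ i, Gamma (2*(s i / b) + 1) / Gamma (s i / b + 1)^2
        ≤ (4:ℝ)^(s i / b) / Real.sqrt (π * (s i / b)) := fun i => central_div_le (hai i)
    have hprodle : ∏ i, (Gamma (2*(s i / b) + 1) / Gamma (s i / b + 1)^2)
        ≤ ∏ i, ((4:ℝ)^(s i / b) / Real.sqrt (π * (s i / b))) :=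
      Finset.prod_le_prod (fun i _ => (div_pos (hGYin i) (pow_pos (hGYid i) 2)).le)
        (fun i _ => hYi i)
    have hstep1 : Adir b s ≤ (Real.sqrt π * (1/b + d + 1) ^ ((d:ℝ) + 1/2) / (2:ℝ) ^ (2*(1/b) + d))
        * (((4:ℝ)^((1 - ∑ i, s i)/b) / Real.sqrt (π * ((1 - ∑ i, s i)/b)))
        * ∏ i, ((4:ℝ)^(s i / b) / Real.sqrt (π * (s i / b)))) := by
      rw [Adir_eq hb0 hs hsum]
      have hY0pos : (0:ℝ) < Gamma (2*((1 - ∑ i, s i)/b) + 1) / Gamma ((1 - ∑ i, s i)/b + 1)^2 := by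
        positivity
      have hY0'pos : (0:ℝ) ≤ (4:ℝ)^((1 - ∑ i, s i)/b) / Real.sqrt (π * ((1 - ∑ i, s i)/b)) := by
        positivity
      refine mul_le_mul hX ?_ (mul_pos hY0pos hprodpos).le (by positivity)
      exact mul_le_mul hY0 hprodle hprodpos.le hY0'pos
    refine hstep1.trans ?_
    rw [alg_eq hb0 hs hsum]
    -- step 2: correction factor
    have hcorr := correction hb0 hb1.le d hd
    have hQpos : (0:ℝ) < (4*π)^((d:ℝ)/2) * Real.sqrt ((1 - ∑ i, s i) * ∏ i, s i) := by
      have : (0:ℝ) < ∏ i, s i := Finset.prod_pos fun i _ => hs i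
      have h1σ : (0:ℝ) < 1 - ∑ i, s i := by linarith
      positivity
    calc b ^ (((d:ℝ)+1)/2) * (1/b + (d:ℝ) + 1) ^ ((d:ℝ)+1/2)
          / ((4*π)^((d:ℝ)/2) * Real.sqrt ((1 - ∑ i, s i) * ∏ i, s i))
        ≤ b ^ (((d:ℝ)+1)/2) * ((1/b + (d:ℝ)) ^ ((d:ℝ)+1/2) * (1 + (2:ℝ)^(d+1) * b))
          / ((4*π)^((d:ℝ)/2) * Real.sqrt ((1 - ∑ i, s i) * ∏ i, s i)) := by
          apply (div_le_div_iff_of_pos_right hQpos).mpr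
          exact mul_le_mul_of_nonneg_left hcorr (Real.rpow_nonneg hb0.le _)
      _ = b ^ (((d:ℝ)+1)/2) * (1/b + (d:ℝ)) ^ ((d:ℝ)+1/2)
          / ((4*π)^((d:ℝ)/2) * Real.sqrt ((1 - ∑ i, s i) * ∏ i, s i)) * (1 + (2:ℝ)^(d+1) * b) := by
          ring
end

section
/- For every fixed s ∈ Int(S_d) and k, ℓ ∈ {1,…,d}, there exist constants C > 0 and b₀ > 0 such that for all b ∈ (0, b₀), | C_b(s;k,ℓ) − b (s_k 𝟙{k=ℓ} − s_k s_ℓ) | ≤ C b², where C_b(s;k,ℓ) = ∫_{S_d} (x_k − s_k)(x_ℓ − s_ℓ) κ_{s,b}(x) dx; that is, C_b(s;k,ℓ) = b (s_k 𝟙{k=ℓ} − s_k s_ℓ) + O(b²) as b → 0. -/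
open MeasureTheory ProbabilityTheory Real Filter Finset Matrix

noncomputable section AuxProofCb
set_option linter.unusedTactic false
set_option linter.unreachableTactic false

lemma Sd_eq (n : ℕ) : Sd n = Set.Icc (0 : Fin n → ℝ) 1 ∩ {x | ∑ i, x i ≤ 1} := by
  ext x; simp [Sd, Set.mem_Icc, Pi.le_def, forall_and]

lemma isClosed_Sd (n : ℕ) : IsClosed (Sd n) := by
  rw [Sd_eq]
  exact isClosed_Icc.inter (isClosed_le (continuous_finset_sum _ fun i _ => continuous_apply i)
    continuous_const)

lemma isCompact_Sd (n : ℕ) : IsCompact (Sd n) := by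
  refine IsCompact.of_isClosed_subset (isCompact_Icc : IsCompact (Set.Icc (0 : Fin n → ℝ) 1))
    (isClosed_Sd n) ?_
  rw [Sd_eq]; exact Set.inter_subset_left

lemma measurableSet_Sd (n : ℕ) : MeasurableSet (Sd n) := (isClosed_Sd n).measurableSet

lemma cont_rpow_const {p : ℝ} (hp : 0 ≤ p) : Continuous (fun x : ℝ => x ^ p) := by
  rcases eq_or_lt_of_le hp with h | h
  · simpa [← h] using continuous_const
  · exact continuous_rpow_const h.le

lemma real_beta {a w : ℝ} (ha : 1 ≤ a) (hw : 1 ≤ w) {c : ℝ} (hc : 0 ≤ c) :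
    ∫ t in (0:ℝ)..c, t ^ (a-1) * (c - t) ^ (w-1)
      = c ^ (a + w - 1) * (Gamma a * Gamma w / Gamma (a+w)) := by
  have ha0 : (0:ℝ) < a := lt_of_lt_of_le one_pos ha
  have hw0 : (0:ℝ) < w := lt_of_lt_of_le one_pos hw
  rcases eq_or_lt_of_le hc with h | h
  · rw [← h, intervalIntegral.integral_same, zero_rpow (by linarith), zero_mul]
  · have key := Complex.betaIntegral_scaled (a : ℂ) (w : ℂ) h
    have hbeta : Complex.betaIntegral a w = Complex.Gamma a * Complex.Gamma w / Complex.Gamma (a+w) := by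
      have := Complex.Gamma_mul_Gamma_eq_betaIntegral (s := (a:ℂ)) (t := (w:ℂ)) (by simpa) (by simpa)
      have hne : Complex.Gamma ((a:ℂ) + w) ≠ 0 :=
        Complex.Gamma_ne_zero_of_re_pos (by simp [Complex.add_re]; linarith)
      field_simp [this]
      rw [this]; ring
    have hint : ∫ x in (0:ℝ)..c, ((x:ℂ) ^ ((a:ℂ)-1) * ((c:ℂ) - x) ^ ((w:ℂ)-1))
        = ((∫ t in (0:ℝ)..c, t ^ (a-1) * (c - t) ^ (w-1) : ℝ) : ℂ) := by
      rw [← intervalIntegral.integral_ofReal]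
      refine intervalIntegral.integral_congr fun x hx => ?_
      rw [Set.uIcc_of_le hc] at hx
      rw [show ((a:ℂ)-1) = ((a-1 : ℝ):ℂ) by push_cast; ring,
        show ((w:ℂ)-1) = ((w-1 : ℝ):ℂ) by push_cast; ring,
        show ((c:ℂ) - (x:ℂ)) = ((c - x : ℝ):ℂ) by push_cast; ring,
        ← Complex.ofReal_cpow hx.1, ← Complex.ofReal_cpow (by linarith [hx.2] : (0:ℝ) ≤ c - x)]
      push_cast; ring
    rw [hint, hbeta] at key
    rw [show ((a:ℂ) + w - 1) = ((a + w - 1 : ℝ):ℂ) by push_cast; ring,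
      ← Complex.ofReal_cpow hc, show ((a:ℂ) + w) = ((a + w : ℝ):ℂ) by push_cast; ring] at key
    simp only [Complex.Gamma_ofReal, ← Complex.ofReal_mul, ← Complex.ofReal_div] at key
    exact_mod_cast key
lemma cons_mem_Sd {n : ℕ} {t : ℝ} {y : Fin n → ℝ} :
    Fin.cons t y ∈ Sd (n+1) ↔ (∀ i, 0 ≤ y i) ∧ 0 ≤ t ∧ t + ∑ i, y i ≤ 1 := by
  constructor
  · rintro ⟨h1, h2⟩
    rw [Fin.sum_cons] at h2
    exact ⟨fun i => (h1 i.succ).1, (h1 0).1, h2⟩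
  · rintro ⟨hy, ht, hsum⟩
    have hsy : 0 ≤ ∑ i, y i := Finset.sum_nonneg fun i _ => hy i
    refine ⟨fun i => ?_, by rwa [Fin.sum_cons]⟩
    refine Fin.cases ?_ (fun j => ?_) i
    · exact ⟨ht, by simpa using le_trans (by linarith) hsum⟩
    · simp only [Fin.cons_succ]
      refine ⟨hy j, ?_⟩
      have : y j ≤ ∑ i, y i := Finset.single_le_sum (fun i _ => hy i) (Finset.mem_univ j)
      linarith

lemma contDens {n : ℕ} {u : Fin n → ℝ} {v : ℝ} (hu : ∀ i, 1 ≤ u i) (hv : 1 ≤ v) :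
    Continuous (fun x : Fin n → ℝ => (1 - ∑ i, x i) ^ (v-1) * ∏ i, (x i) ^ (u i - 1)) := by
  refine Continuous.mul ?_ ?_
  · exact (cont_rpow_const (by linarith)).comp
      (continuous_const.sub (continuous_finset_sum _ fun i _ => continuous_apply i))
  · exact continuous_finset_prod _ fun i _ =>
      (cont_rpow_const (by linarith [hu i])).comp (continuous_apply i)

lemma integrable_Fden {n : ℕ} {u : Fin n → ℝ} {v : ℝ} (hu : ∀ i, 1 ≤ u i) (hv : 1 ≤ v) :
    Integrable ((Sd n).indicator fun x => (1 - ∑ i, x i) ^ (v-1) * ∏ i, (x i) ^ (u i - 1)) := by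
  rw [integrable_indicator_iff (measurableSet_Sd n)]
  exact (contDens hu hv).continuousOn.integrableOn_compact (isCompact_Sd n)

lemma inner_integral {n : ℕ} {u : Fin (n+1) → ℝ} {v : ℝ} (hu : ∀ i, 1 ≤ u i) (hv : 1 ≤ v)
    (y : Fin n → ℝ) :
    ∫ t : ℝ, (Sd (n+1)).indicator
        (fun x => (1 - ∑ i, x i) ^ (v-1) * ∏ i, (x i) ^ (u i - 1)) (Fin.cons t y)
      = (Sd n).indicator (fun y => (Gamma (u 0) * Gamma v / Gamma (u 0 + v)) *
          ((1 - ∑ i, y i) ^ ((u 0 + v) - 1) * ∏ i, (y i) ^ (u i.succ - 1))) y := by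
  have ha : 1 ≤ u 0 := hu 0
  by_cases hy : y ∈ Sd n
  · obtain ⟨hy1, hy2⟩ := hy
    set c : ℝ := 1 - ∑ i, y i with hc
    have hc0 : 0 ≤ c := by simp only [hc]; linarith
    set P : ℝ := ∏ i, (y i) ^ (u i.succ - 1) with hP
    have heq : (fun t : ℝ => (Sd (n+1)).indicator
        (fun x => (1 - ∑ i, x i) ^ (v-1) * ∏ i, (x i) ^ (u i - 1)) (Fin.cons t y))
        = (Set.Icc (0:ℝ) c).indicator (fun t => (t ^ (u 0 - 1) * (c - t) ^ (v-1)) * P) := by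
      funext t
      by_cases ht : t ∈ Set.Icc (0:ℝ) c
      · rw [Set.indicator_of_mem ht,
          Set.indicator_of_mem (cons_mem_Sd.2 ⟨fun i => (hy1 i).1, ht.1, by
            have := ht.2; simp only [hc] at this; linarith⟩)]
        rw [Fin.sum_cons, Fin.prod_univ_succ]
        simp only [Fin.cons_zero, Fin.cons_succ, ← hP]
        rw [show 1 - (t + ∑ i, y i) = c - t by rw [hc]; ring]
        ring
      · rw [Set.indicator_of_notMem ht, Set.indicator_of_notMem]
        intro hmem
        rw [cons_mem_Sd] at hmem
        refine ht ⟨hmem.2.1, ?_⟩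
        simp only [hc]; linarith [hmem.2.2]
      
    rw [heq, integral_indicator measurableSet_Icc, Set.indicator_of_mem (show y ∈ Sd n from ⟨hy1, hy2⟩),
      integral_Icc_eq_integral_Ioc, ← intervalIntegral.integral_of_le hc0,
      intervalIntegral.integral_mul_const, real_beta ha hv hc0]
    ring
  · have hz : ∀ t : ℝ, (Sd (n+1)).indicator
        (fun x => (1 - ∑ i, x i) ^ (v-1) * ∏ i, (x i) ^ (u i - 1)) (Fin.cons t y) = 0 := by
      intro t
      refine Set.indicator_of_notMem (fun hmem => ?_) _
      rw [cons_mem_Sd] at hmem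
      refine hy ⟨fun i => ⟨hmem.1 i, ?_⟩, ?_⟩
      · have h1 : y i ≤ ∑ j, y j := Finset.single_le_sum (fun j _ => hmem.1 j) (Finset.mem_univ i)
        linarith [hmem.2.1, hmem.2.2]
      · linarith [hmem.2.1, hmem.2.2]
    simp only [hz, integral_zero, Set.indicator_of_notMem hy]

lemma Gamma_pos'_s15 {x : ℝ} (hx : 1 ≤ x) : 0 < Gamma x := Gamma_pos_of_pos (by linarith)

lemma Dint_formula : ∀ (n : ℕ) (u : Fin n → ℝ) (v : ℝ), (∀ i, 1 ≤ u i) → 1 ≤ v →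
    (∫ x, (Sd n).indicator (fun x => (1 - ∑ i, x i) ^ (v-1) * ∏ i, (x i) ^ (u i - 1)) x)
      = (∏ i, Gamma (u i)) * Gamma v / Gamma ((∑ i, u i) + v) := by
  intro n
  induction n with
  | zero =>
    intro u v hu hv
    have hSd : Sd 0 = Set.univ := by
      ext x; simp [Sd]
    rw [hSd, Set.indicator_univ]
    simp only [Finset.univ_eq_empty, Finset.sum_empty, Finset.prod_empty, sub_zero, mul_one,
      one_rpow, zero_add, one_mul]
    rw [integral_const]
    rw [volume_pi, measureReal_def, Measure.pi_empty_univ]; simp [div_self (Gamma_pos'_s15 hv).ne']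
  | succ n ih =>
    intro u v hu hv
    have ha : 1 ≤ u 0 := hu 0
    have h1 : (∫ x, (Sd (n+1)).indicator
          (fun x => (1 - ∑ i, x i) ^ (v-1) * ∏ i, (x i) ^ (u i - 1)) x)
        = ∫ p : ℝ × (Fin n → ℝ), (Sd (n+1)).indicator
          (fun x => (1 - ∑ i, x i) ^ (v-1) * ∏ i, (x i) ^ (u i - 1)) (Fin.cons p.1 p.2) := by
      rw [← ((volume_preserving_piFinSuccAbove (fun _ : Fin (n+1) => ℝ) 0).symm).integral_comp']
      simp_rw [MeasurableEquiv.piFinSuccAbove_symm_apply, Fin.insertNthEquiv,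
        Equiv.coe_fn_mk, Fin.insertNth_zero]
      rfl
    have hInt : Integrable (fun p : ℝ × (Fin n → ℝ) => (Sd (n+1)).indicator
        (fun x => (1 - ∑ i, x i) ^ (v-1) * ∏ i, (x i) ^ (u i - 1)) (Fin.cons p.1 p.2))
        (volume.prod volume) := by
      have h := integrable_Fden hu hv
      rw [← ((volume_preserving_piFinSuccAbove (fun _ : Fin (n+1) => ℝ) 0).symm).integrable_comp_emb
        (MeasurableEquiv.measurableEmbedding _)] at h
      simp_rw [Function.comp_def, MeasurableEquiv.piFinSuccAbove_symm_apply, Fin.insertNthEquiv,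
        Equiv.coe_fn_mk, Fin.insertNth_zero] at h
      rw [← Measure.volume_eq_prod]
      exact h
    rw [h1, Measure.volume_eq_prod, integral_prod_symm _ hInt]
    simp only [inner_integral hu hv]
    simp_rw [Set.indicator_const_mul]
    rw [integral_const_mul, ih (fun i => u i.succ) (u 0 + v) (fun i => hu i.succ) (by linarith)]
    rw [Fin.prod_univ_succ, Fin.sum_univ_succ]
    have h2 : (∑ i : Fin n, u i.succ) + (u 0 + v) = (u 0 + ∑ i : Fin n, u i.succ) + v := by ring
    rw [h2]
    have hne : Gamma (u 0 + v) ≠ 0 := (Gamma_pos'_s15 (by linarith)).ne'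
    have hT : Gamma (u 0 + ∑ i : Fin n, u i.succ + v) ≠ 0 := by
      refine (Gamma_pos'_s15 ?_).ne'
      have : (0:ℝ) ≤ ∑ i : Fin n, u i.succ := Finset.sum_nonneg fun i _ => by linarith [hu i.succ]
      linarith
    field_simp

lemma rpow_shift {x p : ℝ} (hx : 0 ≤ x) (hp : 1 ≤ p) : x * x ^ (p - 1) = x ^ p := by
  rcases eq_or_lt_of_le hx with h | h
  · rw [← h, zero_mul, zero_rpow (by linarith : p ≠ 0)]
  · conv_lhs => rw [show x * x ^ (p-1) = x ^ (1:ℝ) * x ^ (p-1) by rw [rpow_one]]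
    rw [← rpow_add h]; norm_num

noncomputable def Sval {n : ℕ} (u : Fin n → ℝ) (v : ℝ) : ℝ :=
  (∏ i, Gamma (u i)) * Gamma v / Gamma ((∑ i, u i) + v)

lemma Sd_setIntegral {n : ℕ} {u : Fin n → ℝ} {v : ℝ} (hu : ∀ i, 1 ≤ u i) (hv : 1 ≤ v) :
    ∫ x in Sd n, (1 - ∑ i, x i) ^ (v-1) * ∏ i, (x i) ^ (u i - 1) = Sval u v := by
  rw [← integral_indicator (measurableSet_Sd n)]
  exact Dint_formula n u v hu hv

lemma gshift {n : ℕ} (u : Fin n → ℝ) (v : ℝ) (hu : ∀ i, 1 ≤ u i) (k : Fin n)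
    {x : Fin n → ℝ} (hx : x ∈ Sd n) :
    x k * ((1 - ∑ i, x i) ^ (v-1) * ∏ i, (x i) ^ (u i - 1))
      = (1 - ∑ i, x i) ^ (v-1) * ∏ i, (x i) ^ (Function.update u k (u k + 1) i - 1) := by
  have hxk : 0 ≤ x k := (hx.1 k).1
  rw [← Finset.mul_prod_erase Finset.univ (fun i => (x i) ^ (u i - 1)) (Finset.mem_univ k),
    ← Finset.mul_prod_erase Finset.univ
      (fun i => (x i) ^ (Function.update u k (u k + 1) i - 1)) (Finset.mem_univ k)]
  have herase : (∏ i ∈ Finset.univ.erase k, (x i) ^ (Function.update u k (u k + 1) i - 1))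
      = ∏ i ∈ Finset.univ.erase k, (x i) ^ (u i - 1) :=
    Finset.prod_congr rfl fun i hi => by rw [Function.update_of_ne (Finset.ne_of_mem_erase hi)]
  rw [herase, Function.update_self, show u k + 1 - 1 = u k by ring, ← rpow_shift hxk (hu k)]
  ring

lemma hu_update {n : ℕ} {u : Fin n → ℝ} (hu : ∀ i, 1 ≤ u i) (k : Fin n) :
    ∀ i, 1 ≤ Function.update u k (u k + 1) i := by
  intro i
  rcases eq_or_ne i k with h | h
  · subst h; rw [Function.update_self]; linarith [hu i]
  · rw [Function.update_of_ne h]; exact hu i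

lemma sum_update {n : ℕ} (u : Fin n → ℝ) (k : Fin n) :
    (∑ i, Function.update u k (u k + 1) i) = (∑ i, u i) + 1 := by
  rw [← Finset.add_sum_erase Finset.univ _ (Finset.mem_univ k),
    ← Finset.add_sum_erase Finset.univ u (Finset.mem_univ k), Function.update_self]
  have : (∑ i ∈ Finset.univ.erase k, Function.update u k (u k + 1) i)
      = ∑ i ∈ Finset.univ.erase k, u i :=
    Finset.sum_congr rfl fun i hi => by rw [Function.update_of_ne (Finset.ne_of_mem_erase hi)]
  rw [this]; ring

lemma S_update {n : ℕ} (u : Fin n → ℝ) (v : ℝ) (hu : ∀ i, 1 ≤ u i) (hv : 1 ≤ v) (k : Fin n) :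
    Sval (Function.update u k (u k + 1)) v = (u k / ((∑ i, u i) + v)) * Sval u v := by
  have hsum : (0:ℝ) ≤ ∑ i, u i := Finset.sum_nonneg fun i _ => by linarith [hu i]
  have hA : (0:ℝ) < (∑ i, u i) + v := by linarith
  have hGA : Gamma ((∑ i, u i) + v) ≠ 0 := (Gamma_pos_of_pos hA).ne'
  unfold Sval
  rw [sum_update, ← Finset.mul_prod_erase Finset.univ (fun i => Gamma (Function.update u k (u k + 1) i))
      (Finset.mem_univ k),
    ← Finset.mul_prod_erase Finset.univ (fun i => Gamma (u i)) (Finset.mem_univ k)]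
  have herase : (∏ i ∈ Finset.univ.erase k, Gamma (Function.update u k (u k + 1) i))
      = ∏ i ∈ Finset.univ.erase k, Gamma (u i) :=
    Finset.prod_congr rfl fun i hi => by rw [Function.update_of_ne (Finset.ne_of_mem_erase hi)]
  rw [herase, Function.update_self, Gamma_add_one (by linarith [hu k] : u k ≠ 0),
    show (∑ i, u i) + 1 + v = ((∑ i, u i) + v) + 1 by ring,
    Gamma_add_one hA.ne']
  field_simp

lemma moment_step {n : ℕ} (u : Fin n → ℝ) (v : ℝ) (hu : ∀ i, 1 ≤ u i) (hv : 1 ≤ v) (k : Fin n) :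
    ∫ x in Sd n, x k * ((1 - ∑ i, x i) ^ (v-1) * ∏ i, (x i) ^ (u i - 1))
      = (u k / ((∑ i, u i) + v)) * Sval u v := by
  rw [setIntegral_congr_fun (measurableSet_Sd n) (fun x hx => gshift u v hu k hx),
    Sd_setIntegral (hu_update hu k) hv, S_update u v hu hv k]

lemma moment_step2 {n : ℕ} (u : Fin n → ℝ) (v : ℝ) (hu : ∀ i, 1 ≤ u i) (hv : 1 ≤ v)
    (k l : Fin n) :
    ∫ x in Sd n, x l * (x k * ((1 - ∑ i, x i) ^ (v-1) * ∏ i, (x i) ^ (u i - 1)))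
      = (Function.update u k (u k + 1) l / (((∑ i, u i) + v) + 1))
        * ((u k / ((∑ i, u i) + v)) * Sval u v) := by
  rw [setIntegral_congr_fun (measurableSet_Sd n)
      (fun x hx => by simp only []; rw [gshift u v hu k hx] :
        Set.EqOn (fun x => x l * (x k * ((1 - ∑ i, x i) ^ (v-1) * ∏ i, (x i) ^ (u i - 1))))
          (fun x => x l * ((1 - ∑ i, x i) ^ (v-1)
            * ∏ i, (x i) ^ (Function.update u k (u k + 1) i - 1))) (Sd n)),
    moment_step _ v (hu_update hu k) hv l, S_update u v hu hv k, sum_update,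
    show (∑ i, u i) + 1 + v = ((∑ i, u i) + v) + 1 by ring]

lemma CbM_eval {d : ℕ} {s : Fin d → ℝ} (hs : s ∈ SdInt d) {b : ℝ} (hb : 0 < b) (k l : Fin d) :
    CbM b s k l =
      Function.update (fun i => s i / b + 1) k (s k / b + 1 + 1) l * (s k / b + 1)
          / (1/b + ((d:ℝ)+1)) / ((1/b + ((d:ℝ)+1)) + 1)
        - s k * (s l / b + 1) / (1/b + ((d:ℝ)+1))
        - s l * (s k / b + 1) / (1/b + ((d:ℝ)+1))
        + s k * s l := by
  obtain ⟨hs1, hs2⟩ := hs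
  set u : Fin d → ℝ := fun i => s i / b + 1 with hu_def
  set v : ℝ := (1 - ∑ i, s i) / b + 1 with hv_def
  have hu : ∀ i, 1 ≤ u i := fun i => by
    have h1 : 0 ≤ s i / b := div_nonneg (hs1 i).le hb.le
    simp only [hu_def]; linarith
  have hv : 1 ≤ v := by
    have h1 : 0 ≤ (1 - ∑ i, s i) / b := by
      apply div_nonneg _ hb.le; linarith
    simp only [hv_def]; linarith
  have hA : (∑ i, u i) + v = 1/b + ((d:ℝ)+1) := by
    simp only [hu_def, hv_def]
    rw [Finset.sum_add_distrib, Finset.sum_const, Finset.card_univ, Fintype.card_fin,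
      nsmul_eq_mul, mul_one, ← Finset.sum_div]
    field_simp
    ring
  set Z : ℝ := Gamma ((∑ i, u i) + v) / (Gamma v * ∏ i, Gamma (u i)) with hZ_def
  set g : (Fin d → ℝ) → ℝ := fun x => (1 - ∑ i, x i) ^ (v-1) * ∏ i, (x i) ^ (u i - 1)
    with hg_def
  have hgc : Continuous g := contDens hu hv
  have hI0 : IntegrableOn g (Sd d) := hgc.continuousOn.integrableOn_compact (isCompact_Sd d)
  have hI1 : IntegrableOn (fun x => x k * g x) (Sd d) :=
    (((continuous_apply k).mul hgc).continuousOn).integrableOn_compact (isCompact_Sd d)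
  have hI2 : IntegrableOn (fun x => x l * g x) (Sd d) :=
    (((continuous_apply l).mul hgc).continuousOn).integrableOn_compact (isCompact_Sd d)
  have hI3 : IntegrableOn (fun x => x l * (x k * g x)) (Sd d) :=
    (((continuous_apply l).mul ((continuous_apply k).mul hgc)).continuousOn).integrableOn_compact
      (isCompact_Sd d)
  have hsplit : ∀ x : Fin d → ℝ, (x k - s k) * (x l - s l) * kappa s b x
      = Z * (x l * (x k * g x)) - (Z * s k) * (x l * g x) - (Z * s l) * (x k * g x)
        + (Z * (s k * s l)) * g x := by
    intro x
    simp only [kappa, Kdir, ← hu_def, ← hv_def, ← hZ_def, hg_def]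
    ring
  have hZS : Z * Sval u v = 1 := by
    have h1 : Gamma ((∑ i, u i) + v) ≠ 0 := by
      refine (Gamma_pos_of_pos ?_).ne'
      have : (0:ℝ) ≤ ∑ i, u i := Finset.sum_nonneg fun i _ => by linarith [hu i]
      linarith
    have h2 : Gamma v ≠ 0 := (Gamma_pos'_s15 hv).ne'
    have h3 : (∏ i, Gamma (u i)) ≠ 0 :=
      Finset.prod_ne_zero_iff.2 fun i _ => (Gamma_pos'_s15 (hu i)).ne'
    rw [hZ_def]; unfold Sval; field_simp
  have hf2 : IntegrableOn (fun x => Z * (x l * (x k * g x)) - Z * s k * (x l * g x)) (Sd d) :=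
    (hI3.const_mul Z).sub (hI2.const_mul (Z * s k))
  have hf3 : IntegrableOn (fun x => Z * (x l * (x k * g x)) - Z * s k * (x l * g x)
      - Z * s l * (x k * g x)) (Sd d) := hf2.sub (hI1.const_mul (Z * s l))
  rw [CbM]
  simp only [hsplit]
  rw [integral_add hf3 (hI0.const_mul (Z * (s k * s l))),
    integral_sub hf2 (hI1.const_mul (Z * s l)),
    integral_sub (hI3.const_mul Z) (hI2.const_mul (Z * s k)),
    integral_const_mul, integral_const_mul, integral_const_mul, integral_const_mul,
    moment_step2 u v hu hv k l, moment_step u v hu hv k, moment_step u v hu hv l,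
    Sd_setIntegral hu hv, hA]
  simp only [hu_def] at hZS ⊢
  linear_combination (Function.update (fun i => s i / b + 1) k (s k / b + 1 + 1) l
      * (s k / b + 1) / (1/b + ((d:ℝ)+1)) / ((1/b + ((d:ℝ)+1)) + 1)
    - s k * (s l / b + 1) / (1/b + ((d:ℝ)+1))
    - s l * (s k / b + 1) / (1/b + ((d:ℝ)+1)) + s k * s l) * hZS

lemma alg_ne (p q e : ℝ) (he : 1 ≤ e) {b : ℝ} (hb : 0 < b) (hb1 : b < 1) :
    |(q/b+1)*(p/b+1)/(1/b+e)/((1/b+e)+1) - p*(q/b+1)/(1/b+e) - q*(p/b+1)/(1/b+e) + p*q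
      + b*(p*q)|
    ≤ (|1-(p+q)*(e+1)+p*q*e*(e+1)+p*q*(2*e+1)| + |p*q*e*(e+1)| + 1) * b^2 := by
  set A : ℝ := 1-(p+q)*(e+1)+p*q*e*(e+1)+p*q*(2*e+1) with hA
  set B : ℝ := p*q*e*(e+1) with hB
  have hb' : b ≠ 0 := hb.ne'
  have hbi : 0 < 1/b := by positivity
  have hA0 : (0:ℝ) < 1/b+e := by linarith
  have hA1 : (0:ℝ) < (1/b+e)+1 := by linarith
  have hD1 : (0:ℝ) < 1+e*b := by nlinarith
  have hD2 : (0:ℝ) < 1+(e+1)*b := by nlinarith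
  have hid : (q/b+1)*(p/b+1)/(1/b+e)/((1/b+e)+1) - p*(q/b+1)/(1/b+e) - q*(p/b+1)/(1/b+e)
      + p*q + b*(p*q) = b^2*(A+B*b)/((1+e*b)*(1+(e+1)*b)) := by
    rw [hA, hB]; field_simp; ring
  rw [hid, abs_div, abs_mul, abs_of_nonneg (by positivity : (0:ℝ) ≤ b^2),
    abs_of_pos (by positivity : (0:ℝ) < (1+e*b)*(1+(e+1)*b))]
  have h1 : |A+B*b| ≤ |A|+|B|+1 := by
    calc |A+B*b| ≤ |A| + |B*b| := abs_add_le _ _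
    _ ≤ |A|+|B|+1 := by
        rw [abs_mul, abs_of_pos hb]
        nlinarith [abs_nonneg B]
  have hD : (1:ℝ) ≤ (1+e*b)*(1+(e+1)*b) := by
    nlinarith [mul_nonneg (mul_nonneg (show (0:ℝ) ≤ e by linarith) hb.le)
      (mul_nonneg (show (0:ℝ) ≤ e+1 by linarith) hb.le),
      mul_nonneg (show (0:ℝ) ≤ e by linarith) hb.le,
      mul_nonneg (show (0:ℝ) ≤ e+1 by linarith) hb.le]
  calc b^2*|A+B*b|/((1+e*b)*(1+(e+1)*b)) ≤ b^2*(|A|+|B|+1)/((1+e*b)*(1+(e+1)*b)) := by gcongr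
  _ ≤ b^2*(|A|+|B|+1)/1 := by gcongr <;> positivity
  _ = (|A|+|B|+1)*b^2 := by ring

lemma alg_eq_s15 (p e : ℝ) (he : 1 ≤ e) {b : ℝ} (hb : 0 < b) (hb1 : b < 1) :
    |(p/b+1+1)*(p/b+1)/(1/b+e)/((1/b+e)+1) - p*(p/b+1)/(1/b+e) - p*(p/b+1)/(1/b+e) + p*p
      - b*(p - p*p)|
    ≤ (|2-2*p*(e+1)+p*p*e*(e+1)-(p-p*p)*(2*e+1)| + |(p-p*p)*e*(e+1)| + 1) * b^2 := by
  set A : ℝ := 2-2*p*(e+1)+p*p*e*(e+1)-(p-p*p)*(2*e+1) with hA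
  set B : ℝ := -((p-p*p)*e*(e+1)) with hB
  have hb' : b ≠ 0 := hb.ne'
  have hbi : 0 < 1/b := by positivity
  have hA0 : (0:ℝ) < 1/b+e := by linarith
  have hA1 : (0:ℝ) < (1/b+e)+1 := by linarith
  have hD1 : (0:ℝ) < 1+e*b := by nlinarith
  have hD2 : (0:ℝ) < 1+(e+1)*b := by nlinarith
  have hid : (p/b+1+1)*(p/b+1)/(1/b+e)/((1/b+e)+1) - p*(p/b+1)/(1/b+e) - p*(p/b+1)/(1/b+e)
      + p*p - b*(p - p*p) = b^2*(A+B*b)/((1+e*b)*(1+(e+1)*b)) := by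
    rw [hA, hB]; field_simp; ring
  rw [hid, abs_div, abs_mul, abs_of_nonneg (by positivity : (0:ℝ) ≤ b^2),
    abs_of_pos (by positivity : (0:ℝ) < (1+e*b)*(1+(e+1)*b))]
  have hBB : |B| = |(p-p*p)*e*(e+1)| := by rw [hB, abs_neg]
  have h1 : |A+B*b| ≤ |A|+|B|+1 := by
    calc |A+B*b| ≤ |A| + |B*b| := abs_add_le _ _
    _ ≤ |A|+|B|+1 := by
        rw [abs_mul, abs_of_pos hb]
        nlinarith [abs_nonneg B]
  have hD : (1:ℝ) ≤ (1+e*b)*(1+(e+1)*b) := by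
    nlinarith [mul_nonneg (mul_nonneg (show (0:ℝ) ≤ e by linarith) hb.le)
      (mul_nonneg (show (0:ℝ) ≤ e+1 by linarith) hb.le),
      mul_nonneg (show (0:ℝ) ≤ e by linarith) hb.le,
      mul_nonneg (show (0:ℝ) ≤ e+1 by linarith) hb.le]
  rw [← hBB]
  calc b^2*|A+B*b|/((1+e*b)*(1+(e+1)*b)) ≤ b^2*(|A|+|B|+1)/((1+e*b)*(1+(e+1)*b)) := by gcongr
  _ ≤ b^2*(|A|+|B|+1)/1 := by gcongr <;> positivity
  _ = (|A|+|B|+1)*b^2 := by ring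

end AuxProofCb

/-- asymptotics of `C_b(s;k,ℓ)` at a fixed interior point. -/
theorem Cb_interior_asymptotics (d : ℕ) (s : Fin d → ℝ) (hs : s ∈ SdInt d) (k l : Fin d) :
    ∃ C > (0 : ℝ), ∃ b₀ > (0 : ℝ), ∀ b ∈ Set.Ioo (0 : ℝ) b₀,
      |CbM b s k l - b * ((if k = l then s k else 0) - s k * s l)| ≤ C * b ^ 2 := by
  have hd1 : (1:ℝ) ≤ (d:ℝ)+1 := by
    have h0 : (0:ℝ) ≤ (d:ℝ) := Nat.cast_nonneg d
    linarith
  by_cases hkl : k = l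
  · subst hkl
    refine ⟨|2-2*(s k)*(((d:ℝ)+1)+1)+(s k)*(s k)*((d:ℝ)+1)*(((d:ℝ)+1)+1)
        -((s k)-(s k)*(s k))*(2*((d:ℝ)+1)+1)|
      + |((s k)-(s k)*(s k))*((d:ℝ)+1)*(((d:ℝ)+1)+1)| + 1, by positivity, 1, one_pos,
      fun b hb => ?_⟩
    rw [CbM_eval hs hb.1 k k, Function.update_self, if_pos rfl]
    exact alg_eq_s15 (s k) ((d:ℝ)+1) hd1 hb.1 hb.2
  · refine ⟨|1-((s k)+(s l))*(((d:ℝ)+1)+1)+(s k)*(s l)*((d:ℝ)+1)*(((d:ℝ)+1)+1)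
        +(s k)*(s l)*(2*((d:ℝ)+1)+1)|
      + |(s k)*(s l)*((d:ℝ)+1)*(((d:ℝ)+1)+1)| + 1, by positivity, 1, one_pos,
      fun b hb => ?_⟩
    rw [CbM_eval hs hb.1 k l, if_neg hkl]
    have hrw : Function.update (fun i => s i / b + 1) k (s k / b + 1 + 1) l * (s k / b + 1)
          / (1/b + ((d:ℝ)+1)) / ((1/b + ((d:ℝ)+1)) + 1)
        - s k * (s l / b + 1) / (1/b + ((d:ℝ)+1))
        - s l * (s k / b + 1) / (1/b + ((d:ℝ)+1)) + s k * s l - b * (0 - s k * s l)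
      = (s l/b+1)*(s k/b+1)/(1/b+((d:ℝ)+1))/((1/b+((d:ℝ)+1))+1)
        - s k*(s l/b+1)/(1/b+((d:ℝ)+1))
        - s l*(s k/b+1)/(1/b+((d:ℝ)+1)) + s k*s l + b*(s k*s l) := by
      rw [Function.update_of_ne (Ne.symm hkl)]
      ring
    rw [hrw]
    exact alg_ne (s k) (s l) ((d:ℝ)+1) hd1 hb.1 hb.2
end
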